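/- Let N ≥ 2, let f_n > 0 for all n ∈ {1,…,N}, let λ > 0, ρ > 0 and α > 0, set H = Σ_{i=1}^N 1/f_i, T_n = ((N−1)/(λ·ρ·H))·(1 − (N−1)/(f_n·H)) and T = Σ_{n=1}^N T_n = (N−1)/(λ·ρ·H). Assume f_n·H > N−1 for every n and α·T > 1, and set η* = α − 1/T and q*_n = T_n·η*. Then the pair (η*, (q*_1,…,q*_N)) is a Stackelberg–Nash equilibrium of the two upper levels of the game: (i) for every n and every q ≥ 0, η*·q*_n/(q*_n + Σ_{i≠n} q*_i) − (λ·ρ/f_n)·q*_n ≥ η*·q/(q + Σ_{i≠n} q*_i) − (λ·ρ/f_n)·q, i.e. (q*_1,…,q*_N) is a Nash equilibrium of the data owners' sub-game given η*; and (ii) for every η ≥ 0, α·log(1 + T·η*) − η* ≥ α·log(1 + T·η) − η, i.e. η* maximizes the model owner's utility given that the data owners respond with contributions T_n·η. -/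

import Mathlib

lemma aux_best_response (η S x A : ℝ) (hη : 0 ≤ η) (hS : 0 < S) (hx : 0 ≤ x)
    (hA : 0 < A) :
    η * x / (x + S) - η * S / A ^ 2 * x ≤
    η * (A - S) / A - η * S / A ^ 2 * (A - S) := by
  rw [← sub_nonneg]
  have hxS : 0 < x + S := by linarith
  have h : η * (A - S) / A - η * S / A ^ 2 * (A - S) -
      (η * x / (x + S) - η * S / A ^ 2 * x) =
      η * S * ((A - S) - x) ^ 2 / (A ^ 2 * (x + S)) := by
    field_simp
    ring
  rw [h]
  positivity

/-- with `T_n` the data owners' response coefficients,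
`T = Σ T_n`, `η* = α − 1/T` and `q*_n = T_n·η*`, the pair `(η*, q*)` is a
Stackelberg–Nash equilibrium: (i) `q*` is a Nash equilibrium of the data owners'
sub-game given `η*`, and (ii) `η*` maximizes the model owner's utility
`α·log(1 + T·η) − η` over `η ≥ 0`. -/
theorem stackelberg_nash_equilibrium (N : ℕ) (hN : 2 ≤ N) (f : Fin N → ℝ)
    (hf : ∀ n, 0 < f n) (lam ρ α : ℝ) (hlam : 0 < lam) (hρ : 0 < ρ) (hα : 0 < α)
    (T : Fin N → ℝ)
    (hT : ∀ n, T n = (((N : ℝ) - 1) / (lam * ρ * ∑ i, 1 / f i)) *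
      (1 - ((N : ℝ) - 1) / (f n * ∑ i, 1 / f i)))
    (Tt : ℝ) (hTt : Tt = ∑ n, T n)
    (hpos : ∀ n, ((N : ℝ) - 1) < f n * ∑ i, 1 / f i)
    (hαT : 1 < α * Tt)
    (ηs : ℝ) (hηs : ηs = α - 1 / Tt)
    (q : Fin N → ℝ) (hq : ∀ n, q n = T n * ηs) :
    (∀ n, ∀ x : ℝ, 0 ≤ x →
      ηs * x / (x + ∑ i ∈ Finset.univ.erase n, q i) - lam * ρ / f n * x ≤
      ηs * q n / (q n + ∑ i ∈ Finset.univ.erase n, q i) - lam * ρ / f n * q n) ∧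
    (∀ η : ℝ, 0 ≤ η →
      α * Real.log (1 + Tt * η) - η ≤ α * Real.log (1 + Tt * ηs) - ηs) := by
  have hNe : (Finset.univ : Finset (Fin N)).Nonempty :=
    ⟨⟨0, by omega⟩, Finset.mem_univ _⟩
  set H := ∑ i, 1 / f i with hHdef
  have hH : 0 < H := Finset.sum_pos (fun i _ => one_div_pos.mpr (hf i)) hNe
  have hN1 : (1 : ℝ) ≤ (N : ℝ) - 1 := by
    have : (2 : ℝ) ≤ (N : ℝ) := by exact_mod_cast hN
    linarith
  have hc : 0 < ((N : ℝ) - 1) / (lam * ρ * H) := by positivity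
  -- value of Tt
  have hTtval : Tt = ((N : ℝ) - 1) / (lam * ρ * H) := by
    rw [hTt]
    have hsum : ∀ n : Fin N,
        T n = (((N : ℝ) - 1) / (lam * ρ * H)) -
          (((N : ℝ) - 1) / (lam * ρ * H)) * (((N : ℝ) - 1) / H) * (1 / f n) := by
      intro n
      rw [hT n]
      have hfn := (hf n).ne'
      field_simp
    rw [Finset.sum_congr rfl (fun n _ => hsum n), Finset.sum_sub_distrib,
      ← Finset.mul_sum, Finset.sum_const, ← hHdef]
    have hcard : (Finset.univ : Finset (Fin N)).card = N := by simp
    rw [hcard]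
    have hHne : H ≠ 0 := hH.ne'
    have hlamne := hlam.ne'
    have hρne := hρ.ne'
    rw [nsmul_eq_mul]
    field_simp
    ring
  have hTtpos : 0 < Tt := hTtval ▸ hc
  have hηspos : 0 < ηs := by
    rw [hηs]
    have h1 : 1 / Tt < α := by
      rw [div_lt_iff₀ hTtpos]
      linarith [hαT]
    linarith
  have hTnpos : ∀ n, 0 < T n := by
    intro n
    rw [hT n]
    have h1 : ((N : ℝ) - 1) / (f n * H) < 1 := by
      rw [div_lt_one (mul_pos (hf n) hH)]
      exact hpos n
    have h2 : 0 < 1 - ((N : ℝ) - 1) / (f n * H) := by linarith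
    exact mul_pos hc h2
  have hdiff : ∀ n, Tt - T n = Tt * (((N : ℝ) - 1) / (f n * H)) := by
    intro n
    rw [hTtval, hT n]
    ring
  have hdiffpos : ∀ n, 0 < Tt - T n := by
    intro n
    rw [hdiff n]
    exact mul_pos hTtpos (div_pos (by linarith) (mul_pos (hf n) hH))
  constructor
  · intro n x hx
    set S := ∑ i ∈ Finset.univ.erase n, q i with hSdef
    have hSval : S = (Tt - T n) * ηs := by
      have h1 : ∑ i ∈ Finset.univ.erase n, q i =
          (∑ i ∈ Finset.univ.erase n, T i) * ηs := by
        rw [Finset.sum_mul]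
        exact Finset.sum_congr rfl fun i _ => hq i
      have h2 : (∑ i ∈ Finset.univ.erase n, T i) + T n = Tt := by
        rw [hTt]
        exact Finset.sum_erase_add _ _ (Finset.mem_univ n)
      rw [hSdef, h1]
      have : (∑ i ∈ Finset.univ.erase n, T i) = Tt - T n := by linarith
      rw [this]
    have hSpos : 0 < S := by
      rw [hSval]; exact mul_pos (hdiffpos n) hηspos
    set A := Tt * ηs with hAdef
    have hApos : 0 < A := mul_pos hTtpos hηspos
    have hqn : q n = A - S := by
      rw [hq n, hAdef, hSval]; ring
    have hcoef : lam * ρ / f n = ηs * S / A ^ 2 := by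
      rw [hSval, hAdef, hdiff n, hTtval]
      have hfn := (hf n).ne'
      have hHne := hH.ne'
      have hηne := hηspos.ne'
      have hN1ne : ((N : ℝ) - 1) ≠ 0 := by linarith
      field_simp
    rw [hqn, hcoef, sub_add_cancel]
    exact aux_best_response ηs S x A hηspos.le hSpos hx hApos
  · intro η hη
    have h1 : (0 : ℝ) < 1 + Tt * η := by
      have : 0 ≤ Tt * η := mul_nonneg hTtpos.le hη
      linarith
    have h2 : 1 + Tt * ηs = α * Tt := by
      rw [hηs]
      field_simp
      ring
    have h2pos : (0 : ℝ) < 1 + Tt * ηs := by rw [h2]; positivity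
    have hlog : Real.log ((1 + Tt * η) / (1 + Tt * ηs)) ≤
        (1 + Tt * η) / (1 + Tt * ηs) - 1 :=
      Real.log_le_sub_one_of_pos (by positivity)
    rw [Real.log_div h1.ne' h2pos.ne'] at hlog
    have h3 : (1 + Tt * η) / (1 + Tt * ηs) - 1 = (η - ηs) / α := by
      rw [h2, hηs]
      field_simp
      ring
    rw [h3] at hlog
    have h4 := mul_le_mul_of_nonneg_left hlog hα.le
    have h5 : α * ((η - ηs) / α) = η - ηs := by field_simp
    rw [h5] at h4
    linarith
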